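/- Let p be a strongly 312-avoiding permutation of length n ≥ 2 with p(n) = 1. Then p(n-1) = 2. -/

import Mathlib

set_option maxHeartbeats 1000000


def Avoids312 {n : ℕ} (p : Equiv.Perm (Fin n)) : Prop :=
  ¬ ∃ a b c : Fin n, a < b ∧ b < c ∧ p b < p c ∧ p c < p a

def StronglyAvoids312 {n : ℕ} (p : Equiv.Perm (Fin n)) : Prop :=
  Avoids312 p ∧ Avoids312 (p * p)

theorem penultimate_is_two {n : ℕ} (hn : 2 ≤ n) (p : Equiv.Perm (Fin n))
    (hp : StronglyAvoids312 p) (hlast : (p ⟨n - 1, by omega⟩ : ℕ) = 0) :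
    (p ⟨n - 2, by omega⟩ : ℕ) = 1 := by
  by_contra hne
  obtain ⟨h1, h2⟩ := hp
  set last : Fin n := ⟨n - 1, by omega⟩ with hlastdef
  set pen : Fin n := ⟨n - 2, by omega⟩ with hpendef
  have hplast : p last = ⟨0, by omega⟩ := Fin.ext hlast
  have hlastv : (last : ℕ) = n - 1 := rfl
  have hpenv : (pen : ℕ) = n - 2 := rfl
  have hpenlt : (p pen : ℕ) < n := (p pen).isLt
  have hpen0 : (p pen : ℕ) ≠ 0 := by
    intro h
    have he : p pen = p last := by
      rw [hplast]; exact Fin.ext h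
    have := p.injective he
    have := congrArg Fin.val this
    simp only [hpendef, hlastdef] at this
    omega
  -- dispose of n = 2
  rcases Nat.lt_or_ge n 3 with h2n | hn3
  · omega
  -- so n ≥ 3
  obtain ⟨j, hpj⟩ : ∃ j : Fin n, p j = ⟨1, by omega⟩ := ⟨p.symm _, p.apply_symm_apply _⟩
  obtain ⟨m, hpm⟩ : ∃ m : Fin n, p m = ⟨n - 1, by omega⟩ := ⟨p.symm _, p.apply_symm_apply _⟩
  obtain ⟨z0, hz0⟩ : ∃ z : Fin n, (z : ℕ) = 0 := ⟨⟨0, by omega⟩, rfl⟩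
  have hplast' : p last = z0 := by
    apply Fin.ext; omega
  have hpjv : (p j : ℕ) = 1 := by rw [hpj]
  have hpmv : (p m : ℕ) = n - 1 := by rw [hpm]
  have hjlt : (j : ℕ) < n - 2 := by
    have hj1 : (j : ℕ) ≠ n - 2 := by
      intro h
      have : j = pen := Fin.ext h
      rw [this] at hpjv; omega
    have hj2 : (j : ℕ) ≠ n - 1 := by
      intro h
      have : j = last := Fin.ext h
      rw [this] at hpjv
      rw [hlast] at hpjv; omega
    have := j.isLt; omega
  have hv0lt : (p z0 : ℕ) < n := (p z0).isLt
  have hv0pos : 0 < (p z0 : ℕ) := by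
    rcases Nat.eq_zero_or_pos (p z0 : ℕ) with h | h
    · exfalso
      have he : p z0 = p last := by
        apply Fin.ext; omega
      have := congrArg Fin.val (p.injective he)
      omega
    · exact h
  have hm0 : (m : ℕ) ≠ 0 := by
    intro h
    have hm' : m = z0 := Fin.ext (by omega)
    have hv0n : (p z0 : ℕ) = n - 1 := by rw [← hm', hpmv]
    by_cases hj0 : (j : ℕ) = 0
    · have hj' : j = z0 := Fin.ext (by omega)
      rw [hj'] at hpjv
      omega
    · exact h1 ⟨z0, j, pen, by
        simp only [Fin.lt_def]; omega, by
        simp only [Fin.lt_def, hpendef]; omega, by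
        simp only [Fin.lt_def]; omega, by
        simp only [Fin.lt_def]
        have hpenm : (p pen : ℕ) ≠ n - 1 := by
          intro hh
          have : p pen = p m := by rw [hpm]; exact Fin.ext hh
          have := congrArg Fin.val (p.injective this)
          simp only [hpendef] at this
          omega
        omega⟩
  have hqm : ((p * p) m : ℕ) = 0 := by
    have : (p * p) m = p (p m) := rfl
    rw [this, hpm]
    exact hlast
  have hqlast : ((p * p) last : ℕ) = (p z0 : ℕ) := by
    have h' : (p * p) last = p (p last) := rfl
    rw [h', hplast']
  have hmltlast : (m : ℕ) < n - 1 := by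
    have hne' : (m : ℕ) ≠ n - 1 := by
      intro h
      have : m = last := Fin.ext h
      rw [this, hlast] at hpmv; omega
    have := m.isLt; omega
  by_cases hex : ∃ a : Fin n, (a : ℕ) < (m : ℕ) ∧ (p z0 : ℕ) < ((p * p) a : ℕ)
  · obtain ⟨a, ham, hva⟩ := hex
    exact h2 ⟨a, m, last, by
      simp only [Fin.lt_def]; omega, by
      simp only [Fin.lt_def]; omega, by
      simp only [Fin.lt_def]; omega, by
      simp only [Fin.lt_def]; omega⟩
  · push_neg at hex
    -- pigeonhole 1 : m + 1 ≤ v0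
    have hmv0 : (m : ℕ) + 1 ≤ (p z0 : ℕ) := by
      have hcard := Finset.card_le_card_of_injOn (fun a : Fin n => ((p * p) a : ℕ))
        (s := Finset.Iio m) (t := Finset.Ico 1 (p z0 : ℕ)) ?_ ?_
      · rw [Fin.card_Iio, Nat.card_Ico] at hcard
        omega
      · intro a ha
        simp only [Finset.mem_coe, Finset.mem_Iio, Fin.lt_def] at ha
        simp only [Finset.mem_coe, Finset.mem_Ico]
        have hle := hex a ha
        have hne1 : ((p * p) a : ℕ) ≠ 0 := by
          intro hh
          have : (p * p) a = (p * p) m := by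
            apply Fin.ext; rw [hqm, hh]
          have := congrArg Fin.val ((p * p).injective this)
          omega
        have hne2 : ((p * p) a : ℕ) ≠ (p z0 : ℕ) := by
          intro hh
          have : (p * p) a = (p * p) last := by
            apply Fin.ext; rw [hqlast, hh]
          have := congrArg Fin.val ((p * p).injective this)
          simp only [hlastdef] at this
          omega
        omega
      · intro a _ b _ hab
        exact (p * p).injective (Fin.ext hab)
    -- j > 0
    have hjpos : 0 < (j : ℕ) := by
      rcases Nat.eq_zero_or_pos (j : ℕ) with h | h
      · exfalso
        have hj' : j = z0 := Fin.ext (by omega)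
        rw [hj'] at hpjv
        omega
      · exact h
    -- pigeonhole 2 : v0 ≤ j + 1
    have hsymm : ∀ w : Fin n, 1 ≤ (w : ℕ) → (w : ℕ) ≤ (p z0 : ℕ) → (p.symm w : ℕ) ≤ (j : ℕ) := by
      intro w h1w h2w
      by_contra hc
      push_neg at hc
      have hpc : p (p.symm w) = w := p.apply_symm_apply w
      have hw1 : (w : ℕ) ≠ 1 := by
        intro hh
        have : p.symm w = j := by
          apply p.injective; rw [hpc, hpj]; exact Fin.ext hh
        rw [this] at hc; omega
      have hwv0 : (w : ℕ) ≠ (p z0 : ℕ) := by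
        intro hh
        have hz' : p.symm w = z0 := by
          apply p.injective; rw [hpc]; exact Fin.ext hh
        rw [hz'] at hc
        omega
      exact h1 ⟨z0, j, p.symm w, by
        simp only [Fin.lt_def]; omega, by
        simp only [Fin.lt_def]; omega, by
        simp only [Fin.lt_def, hpc]; omega, by
        simp only [Fin.lt_def, hpc]; omega⟩
    obtain ⟨one, hone⟩ : ∃ w : Fin n, (w : ℕ) = 1 := ⟨⟨1, by omega⟩, rfl⟩
    have hv0j : (p z0 : ℕ) ≤ (j : ℕ) + 1 := by
      have hcard := Finset.card_le_card_of_injOn (fun w : Fin n => (p.symm w : ℕ))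
        (s := Finset.Icc one (p z0)) (t := Finset.range ((j : ℕ) + 1)) ?_ ?_
      · rw [Fin.card_Icc, Finset.card_range] at hcard
        omega
      · intro w hw
        simp only [Finset.mem_coe, Finset.mem_Icc, Fin.le_def] at hw
        rw [hone] at hw
        simp only [Finset.mem_coe, Finset.mem_range]
        have := hsymm w hw.1 hw.2
        omega
      · intro a _ b _ hab
        exact p.symm.injective (Fin.ext hab)
    have hmj : (m : ℕ) < (j : ℕ) := by
      have hne' : (m : ℕ) ≠ (j : ℕ) := by
        intro h
        have : m = j := Fin.ext h
        rw [this, hpjv] at hpmv; omega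
      omega
    exact h1 ⟨m, j, pen, by
      simp only [Fin.lt_def]; omega, by
      simp only [Fin.lt_def, hpendef]; omega, by
      simp only [Fin.lt_def]; omega, by
      simp only [Fin.lt_def]
      have hpenm : (p pen : ℕ) ≠ n - 1 := by
        intro hh
        have : p pen = p m := by rw [hpm]; exact Fin.ext hh
        have := congrArg Fin.val (p.injective this)
        simp only [hpendef] at this
        omega
      omega⟩
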